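/- Let φ : ℝ → ℝ be a continuous mapping, let S ⊂ ℝ be a finite set, and let N ≥ 4 be an integer. Suppose that for every x, y ∈ ℝ there exist v ∈ V and k ∈ [1,N]⁴ ∩ ℤ₀⁴ such that Σ_{j=1}^{4} v_j·φ(x+k_j·y) ∈ S. Then the set of nonlinearity E(φ) is nowhere dense; in particular, every nonempty open interval Δ ⊆ ℝ contains a nonempty open subinterval on which φ coincides with an affine function. -/

import Mathlib

open MeasureTheory Set

/-- The set of nonlinearity of `φ`: points having no open neighborhood
on which `φ` coincides with an affine function. -/
def NonlinSet (φ : ℝ → ℝ) : Set ℝ :=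
  {t | ¬ ∃ ε > (0 : ℝ), ∃ p q : ℝ, ∀ u : ℝ, |u - t| < ε → φ u = p * u + q}

/-- The family `V` of seven vectors in `ℝ⁴`. -/
def Vfam : Set (Fin 4 → ℝ) :=
  { ![1, 1, -1, -1], ![1, 1, -2, 0], ![1, -1, 0, 0], ![1, 1, 0, 0],
    ![2, 0, 0, 0], ![1, 1, -1, 0], ![1, 0, 0, 0] }

namespace NLAux

open Filter

lemma midpoint_zero (h : ℝ → ℝ) (hc : Continuous h)
    (hm : ∀ s ∈ Icc (0:ℝ) 1, ∀ t ∈ Icc (0:ℝ) 1, h ((s+t)/2) = (h s + h t)/2)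
    (h0 : h 0 = 0) (h1 : h 1 = 0) : ∀ t ∈ Icc (0:ℝ) 1, h t = 0 := by
  have key : ∀ n m : ℕ, m ≤ 2^n → h ((m : ℝ) / 2^n) = 0 := by
    intro n
    induction n with
    | zero =>
      intro m hm'
      interval_cases m <;> simpa
    | succ n ih =>
      intro m hm'
      have hpos : (0:ℝ) < 2^n := by positivity
      rcases Nat.even_or_odd m with ⟨j, hj⟩ | ⟨j, hj⟩
      · subst hj
        have hj2 : j ≤ 2^n := by
          have h2 : j + j ≤ 2*2^n := by
            have := hm'
            rw [pow_succ] at this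
            omega
          omega
        have : ((j + j : ℕ) : ℝ) / 2^(n+1) = (j:ℝ)/2^n := by
          push_cast
          field_simp
          ring
        rw [this]
        exact ih j hj2
      · subst hj
        have hj2 : j + 1 ≤ 2^n := by
          have h2 : 2*j+1 ≤ 2^n * 2 := by rw [← pow_succ]; exact hm'
          omega
        have harg : ((2*j + 1 : ℕ) : ℝ) / 2^(n+1) = ((j:ℝ)/2^n + ((j+1 : ℕ):ℝ)/2^n)/2 := by
          push_cast
          field_simp
          ring
        rw [harg, hm _ ⟨by positivity, by
              rw [div_le_one hpos]; exact_mod_cast le_trans (Nat.le_succ j) hj2⟩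
            _ ⟨by positivity, by rw [div_le_one hpos]; exact_mod_cast hj2⟩,
          ih j (le_trans (Nat.le_succ j) hj2), ih (j+1) hj2]
        norm_num
  intro t ht
  set u : ℕ → ℝ := fun n => (⌊t * 2^n⌋₊ : ℝ) / 2^n with hu
  have hfl : ∀ n : ℕ, ⌊t * 2^n⌋₊ ≤ 2^n := by
    intro n
    have h1' : t * 2^n ≤ 2^n := by nlinarith [ht.2, (by positivity : (0:ℝ) < (2:ℝ)^n)]
    calc ⌊t * 2^n⌋₊ ≤ ⌊((2^n : ℕ) : ℝ)⌋₊ := Nat.floor_le_floor (by push_cast; linarith)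
      _ = 2^n := Nat.floor_natCast _
  have hu0 : ∀ n, h (u n) = 0 := fun n => key n _ (hfl n)
  have hlb : ∀ n, t - (1/2)^n ≤ u n := by
    intro n
    have hpos : (0:ℝ) < 2^n := by positivity
    have := Nat.lt_floor_add_one (t * 2^n)
    show t - (1/2)^n ≤ (⌊t * 2^n⌋₊ : ℝ) / 2^n
    rw [le_div_iff₀ hpos]
    have hp : (1/2:ℝ)^n * 2^n = 1 := by
      rw [← mul_pow]; norm_num
    nlinarith [this]
  have hub : ∀ n, u n ≤ t := by
    intro n
    have hpos : (0:ℝ) < 2^n := by positivity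
    have hfle := Nat.floor_le (by nlinarith [ht.1] : (0:ℝ) ≤ t * 2^n)
    show (⌊t * 2^n⌋₊ : ℝ) / 2^n ≤ t
    rw [div_le_iff₀ hpos]
    linarith
  have htend : Tendsto u atTop (nhds t) := by
    apply tendsto_of_tendsto_of_tendsto_of_le_of_le (g := fun n => t - (1/2)^n)
      (h := fun _ => t)
    · have : Tendsto (fun n : ℕ => (1/2:ℝ)^n) atTop (nhds 0) := by
        apply tendsto_pow_atTop_nhds_zero_of_lt_one <;> norm_num
      simpa using tendsto_const_nhds.sub this
    · exact tendsto_const_nhds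
    · exact hlb
    · exact hub
  have : Tendsto (h ∘ u) atTop (nhds (h t)) := (hc.tendsto t).comp htend
  have hconst : Tendsto (h ∘ u) atTop (nhds 0) := by
    have : (h ∘ u) = fun _ => 0 := funext hu0
    rw [this]; exact tendsto_const_nhds
  exact tendsto_nhds_unique this hconst

lemma midpoint_affine (f : ℝ → ℝ) (hf : Continuous f) (c d : ℝ) (hcd : c < d)
    (hm : ∀ s ∈ Icc c d, ∀ t ∈ Icc c d, f ((s+t)/2) = (f s + f t)/2) :
    ∀ t ∈ Icc c d, f t = f c + (f d - f c) * (t - c) / (d - c) := by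
  have hdc : (0:ℝ) < d - c := by linarith
  set h : ℝ → ℝ := fun u => f (c + u*(d-c)) - (f c + u*(f d - f c)) with hh
  have hco : Continuous h := by
    apply Continuous.sub
    · exact hf.comp (by continuity)
    · continuity
  have hmem : ∀ u : ℝ, u ∈ Icc (0:ℝ) 1 → c + u*(d-c) ∈ Icc c d := by
    intro u hu
    constructor <;> nlinarith [hu.1, hu.2]
  have hmid : ∀ s ∈ Icc (0:ℝ) 1, ∀ t ∈ Icc (0:ℝ) 1, h ((s+t)/2) = (h s + h t)/2 := by
    intro s hs t ht
    have harg : c + ((s+t)/2)*(d-c) = ((c + s*(d-c)) + (c + t*(d-c)))/2 := by ring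
    simp only [hh]
    rw [harg, hm _ (hmem s hs) _ (hmem t ht)]
    ring
  have h0 : h 0 = 0 := by simp [hh]
  have h1 : h 1 = 0 := by simp [hh]
  have hz := midpoint_zero h hco hmid h0 h1
  intro t ht
  have hu : (t - c)/(d - c) ∈ Icc (0:ℝ) 1 := by
    constructor
    · apply div_nonneg (by linarith [ht.1]) (le_of_lt hdc)
    · rw [div_le_one hdc]; linarith [ht.2]
  have := hz _ hu
  simp only [hh] at this
  have harg : c + (t - c)/(d - c)*(d-c) = t := by field_simp; ring
  rw [harg] at this
  have : f t = f c + (t - c)/(d - c) * (f d - f c) := by linarith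
  rw [this]; ring

lemma incr_affine (φ : ℝ → ℝ) (hφ : Continuous φ) (c₁ ρ : ℝ) (hρ : 0 < ρ)
    (H : ∀ u u' δ : ℝ, |u - c₁| ≤ ρ → |u' - c₁| ≤ ρ → |δ| ≤ ρ →
      φ (u + δ) - φ u = φ (u' + δ) - φ u') :
    ∃ p q : ℝ, ∀ t, |t - c₁| ≤ ρ/2 → φ t = p * t + q := by
  set c := c₁ - ρ/2 with hc
  set d := c₁ + ρ/2 with hd
  have hcd : c < d := by simp [hc, hd]; linarith
  have hmidle : ∀ s ∈ Icc c d, ∀ t ∈ Icc c d, s ≤ t → φ ((s+t)/2) = (φ s + φ t)/2 := by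
    intro s hs t ht hst
    have hδ : |(t - s)/2| ≤ ρ := by
      rw [abs_of_nonneg (by linarith)]
      simp only [hc, hd] at hs ht
      linarith [hs.1, ht.2]
    have h1 : |s - c₁| ≤ ρ := by
      simp only [hc, hd] at hs
      rw [abs_le]; constructor <;> linarith [hs.1, hs.2]
    have h2 : |s + (t - s)/2 - c₁| ≤ ρ := by
      simp only [hc, hd] at hs ht
      rw [abs_le]; constructor <;> linarith [hs.1, hs.2, ht.1, ht.2]
    have := H s (s + (t-s)/2) ((t-s)/2) h1 h2 hδ
    have harg1 : s + (t-s)/2 + (t-s)/2 = t := by ring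
    rw [harg1] at this
    have harg2 : s + (t-s)/2 = (s+t)/2 := by ring
    rw [harg2] at this
    linarith
  have hmid : ∀ s ∈ Icc c d, ∀ t ∈ Icc c d, φ ((s+t)/2) = (φ s + φ t)/2 := by
    intro s hs t ht
    rcases le_total s t with h | h
    · exact hmidle s hs t ht h
    · rw [show (s+t)/2 = (t+s)/2 by ring, hmidle t ht s hs h]; ring
  have := midpoint_affine φ hφ c d hcd hmid
  refine ⟨(φ d - φ c)/(d - c), φ c - (φ d - φ c)/(d - c) * c, ?_⟩
  intro t ht
  have htm : t ∈ Icc c d := by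
    rw [abs_le] at ht
    simp only [hc, hd]
    constructor <;> [linarith [ht.1]; linarith [ht.2]]
  have hdc : (0:ℝ) < d - c := by linarith
  rw [this t htm]
  field_simp
  ring

set_option maxHeartbeats 1000000 in
lemma secdiff_quad (φ : ℝ → ℝ) (hφ : Continuous φ) (c₁ ρ : ℝ) (hρ : 0 < ρ)
    (H : ∀ u u' δ δ' : ℝ, |u - c₁| ≤ ρ → |u' - c₁| ≤ ρ → |δ| ≤ ρ → |δ'| ≤ ρ →
      φ (u + δ + δ') - φ (u + δ) - φ (u + δ') + φ u
      = φ (u' + δ + δ') - φ (u' + δ) - φ (u' + δ') + φ u') :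
    ∃ p q r : ℝ, ∀ t, |t - c₁| ≤ ρ/16 → φ t = p * t^2 + q * t + r := by
  set c := c₁ - ρ/2 with hcdef
  set d := c₁ + ρ/2 with hddef
  set ψ : ℝ → ℝ → ℝ := fun δ u => φ (u + δ) - φ u with hψ
  set A : ℝ → ℝ := fun δ => (ψ δ d - ψ δ c) / (d - c) with hA
  have hdc : d - c = ρ := by simp only [hcdef, hddef]; ring
  have hdcpos : (0:ℝ) < d - c := by rw [hdc]; exact hρ
  -- Step 1: for each |δ| ≤ ρ, ψ δ is affine on [c,d]
  have fact1 : ∀ δ : ℝ, |δ| ≤ ρ → ∀ u, |u - c₁| ≤ ρ/2 →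
      ψ δ u = ψ δ c + A δ * (u - c) := by
    intro δ hδ
    have hco : Continuous (ψ δ) := (hφ.comp (by continuity)).sub hφ
    have hmidle : ∀ s ∈ Icc c d, ∀ t ∈ Icc c d, s ≤ t →
        ψ δ ((s+t)/2) = (ψ δ s + ψ δ t)/2 := by
      intro s hs t ht hst
      simp only [hcdef, hddef] at hs ht
      have hδ' : |(t - s)/2| ≤ ρ := by
        rw [abs_of_nonneg (by linarith)]
        linarith [hs.1, ht.2]
      have h1 : |s - c₁| ≤ ρ := by rw [abs_le]; constructor <;> linarith [hs.1, hs.2]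
      have h2 : |s + (t - s)/2 - c₁| ≤ ρ := by
        rw [abs_le]; constructor <;> linarith [hs.1, hs.2, ht.1, ht.2]
      have key := H s (s + (t-s)/2) δ ((t-s)/2) h1 h2 hδ hδ'
      simp only [hψ]
      have e1 : s + δ + (t-s)/2 = (s+t)/2 + δ := by ring
      have e3 : s + (t-s)/2 + δ + (t-s)/2 = t + δ := by ring
      have e5 : s + (t-s)/2 + δ = (s+t)/2 + δ := by ring
      have e4 : s + (t-s)/2 + (t-s)/2 = t := by ring
      have e2 : s + (t-s)/2 = (s+t)/2 := by ring
      rw [e1, e3, e5, e4, e2] at key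
      linarith
    have hmid : ∀ s ∈ Icc c d, ∀ t ∈ Icc c d, ψ δ ((s+t)/2) = (ψ δ s + ψ δ t)/2 := by
      intro s hs t ht
      rcases le_total s t with h | h
      · exact hmidle s hs t ht h
      · rw [show (s+t)/2 = (t+s)/2 by ring, hmidle t ht s hs h]; ring
    have haff := midpoint_affine (ψ δ) hco c d (by rw [← sub_pos, hdc]; exact hρ) hmid
    intro u hu
    have hum : u ∈ Icc c d := by
      rw [abs_le] at hu
      simp only [hcdef, hddef]; constructor <;> linarith [hu.1, hu.2]
    rw [haff u hum]
    simp only [hA]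
    field_simp
  -- Step 2: A is additive for |δᵢ| ≤ ρ/4
  have fact2 : ∀ δ₁ δ₂ : ℝ, |δ₁| ≤ ρ/4 → |δ₂| ≤ ρ/4 → A (δ₁ + δ₂) = A δ₁ + A δ₂ := by
    intro δ₁ δ₂ h1 h2
    rw [abs_le] at h1 h2
    have h12 : |δ₁ + δ₂| ≤ ρ := by rw [abs_le]; constructor <;> linarith [h1.1, h1.2, h2.1, h2.2]
    have h1' : |δ₁| ≤ ρ := by rw [abs_le]; constructor <;> linarith [h1.1, h1.2]
    have h2' : |δ₂| ≤ ρ := by rw [abs_le]; constructor <;> linarith [h2.1, h2.2]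
    have hid : ∀ u : ℝ, ψ (δ₁ + δ₂) u = ψ δ₂ (u + δ₁) + ψ δ₁ u := by
      intro u
      simp only [hψ]
      have : u + (δ₁ + δ₂) = u + δ₁ + δ₂ := by ring
      rw [this]; ring
    have e0 := hid c₁
    have e1 := hid (c₁ + ρ/4)
    have b0 : |c₁ - c₁| ≤ ρ/2 := by rw [abs_le]; constructor <;> linarith
    have b1 : |c₁ + ρ/4 - c₁| ≤ ρ/2 := by rw [abs_le]; constructor <;> linarith
    have b2 : |c₁ + δ₁ - c₁| ≤ ρ/2 := by rw [abs_le]; constructor <;> linarith [h1.1, h1.2]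
    have b3 : |c₁ + ρ/4 + δ₁ - c₁| ≤ ρ/2 := by rw [abs_le]; constructor <;> linarith [h1.1, h1.2]
    rw [fact1 _ h12 _ b0] at e0
    rw [fact1 _ h2' _ b2] at e0
    rw [fact1 _ h1' _ b0] at e0
    rw [fact1 _ h12 _ b1] at e1
    rw [fact1 _ h2' _ b3] at e1
    rw [fact1 _ h1' _ b1] at e1
    have key2 : A (δ₁ + δ₂) * (ρ/4) = (A δ₁ + A δ₂) * (ρ/4) := by
      linear_combination e1 - e0
    exact mul_right_cancel₀ (by positivity) key2
  -- Step 3: A 0 = 0 and A is continuous, A midpoint-affine near 0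
  have hA0 : A 0 = 0 := by
    have := fact2 0 0 (by rw [abs_le]; constructor <;> linarith) (by rw [abs_le]; constructor <;> linarith)
    simp at this
    linarith
  have hAcont : Continuous A := by
    have : A = fun δ => ((φ (d + δ) - φ d) - (φ (c + δ) - φ c)) / (d - c) := by
      funext δ
      simp only [hA, hψ]
    rw [this]
    apply Continuous.div_const
    exact ((hφ.comp (by continuity)).sub continuous_const).sub ((hφ.comp (by continuity)).sub continuous_const)
  have hAmid : ∀ s ∈ Icc (-(ρ/8)) (ρ/8), ∀ t ∈ Icc (-(ρ/8)) (ρ/8),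
      A ((s+t)/2) = (A s + A t)/2 := by
    intro s hs t ht
    simp only [mem_Icc] at hs ht
    have q1 : |s/2| ≤ ρ/4 := by rw [abs_le]; constructor <;> linarith [hs.1, hs.2]
    have q2 : |t/2| ≤ ρ/4 := by rw [abs_le]; constructor <;> linarith [ht.1, ht.2]
    have hs2 : A (s/2 + s/2) = A (s/2) + A (s/2) := fact2 _ _ q1 q1
    have ht2 : A (t/2 + t/2) = A (t/2) + A (t/2) := fact2 _ _ q2 q2
    have hst : A (s/2 + t/2) = A (s/2) + A (t/2) := fact2 _ _ q1 q2
    have es : s/2 + s/2 = s := by ring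
    have et : t/2 + t/2 = t := by ring
    have est : s/2 + t/2 = (s+t)/2 := by ring
    rw [es] at hs2; rw [et] at ht2; rw [est] at hst
    linarith
  have hAaff := midpoint_affine A hAcont (-(ρ/8)) (ρ/8) (by linarith) hAmid
  set r := ρ/8 with hrdef
  have hrpos : 0 < r := by rw [hrdef]; positivity
  have hrne : r ≠ 0 := ne_of_gt hrpos
  set κ := A r / r with hκ
  have fact3 : ∀ t : ℝ, |t| ≤ r → A t = κ * t := by
    have h0mem : (0:ℝ) ∈ Icc (-r) r := by constructor <;> linarith
    have hval := hAaff 0 h0mem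
    rw [hA0] at hval
    have d1 : (0 - -r : ℝ) = r := by ring
    have d2 : (r - -r : ℝ) = 2*r := by ring
    rw [d1, d2] at hval
    have hval' : -(A (-r)) = (A r - A (-r)) * r / (2*r) := by linarith
    rw [eq_div_iff (by positivity : (2*r : ℝ) ≠ 0)] at hval'
    have hX : A (-r) = - A r := by
      have h2 : A (-r) * r = (- A r) * r := by linear_combination -hval'
      exact mul_right_cancel₀ hrne h2
    intro t ht
    rw [abs_le] at ht
    have htm : t ∈ Icc (-r) r := by constructor <;> linarith [ht.1, ht.2]
    have h := hAaff t htm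
    rw [d2] at h
    have h' : A t - A (-r) = (A r - A (-r)) * (t - -r) / (2*r) := by linarith
    rw [eq_div_iff (by positivity : (2*r : ℝ) ≠ 0)] at h'
    have goal' : A t * r = A r * t := by
      linear_combination (1/2) * h' + ((r - t)/2) * hX
    rw [hκ, div_mul_eq_mul_div, eq_div_iff hrne]
    linarith [goal']
  -- Step 4: g := φ - (κ/2) t² has constant increments
  set p := κ/2 with hp
  set g : ℝ → ℝ := fun t => φ t - p * t^2 with hg
  have hgH : ∀ u u' δ : ℝ, |u - c₁| ≤ r → |u' - c₁| ≤ r → |δ| ≤ r →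
      g (u + δ) - g u = g (u' + δ) - g u' := by
    have main : ∀ u δ : ℝ, |u - c₁| ≤ r → |δ| ≤ r →
        g (u + δ) - g u = ψ δ c + κ * δ * (u - c) - p*(2*u*δ + δ^2) := by
      intro u δ hu hδ
      have hδ' : |δ| ≤ ρ := by rw [abs_le] at hδ ⊢; rw [hrdef] at hδ; constructor <;> linarith [hδ.1, hδ.2]
      have hu' : |u - c₁| ≤ ρ/2 := by rw [abs_le] at hu ⊢; rw [hrdef] at hu; constructor <;> linarith [hu.1, hu.2]
      have h1 := fact1 δ hδ' u hu'
      rw [fact3 δ hδ] at h1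
      simp only [hψ] at h1
      simp only [hg]
      linear_combination h1
    intro u u' δ hu hu' hδ
    rw [main u δ hu hδ, main u' δ hu' hδ]
    ring
  -- Step 5: conclude
  have hgcont : Continuous g := hφ.sub (by continuity)
  obtain ⟨q', r', hqr⟩ := incr_affine g hgcont c₁ r hrpos hgH
  refine ⟨p, q', r', ?_⟩
  intro t ht
  have ht' : |t - c₁| ≤ r/2 := by rw [hrdef]; rw [abs_le] at ht ⊢; constructor <;> linarith [ht.1, ht.2]
  have := hqr t ht'
  simp only [hg] at this
  linarith [this]

lemma Vfam_finite : Vfam.Finite := by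
  unfold Vfam
  exact (((((((Set.finite_singleton _).insert _).insert _).insert _).insert _).insert _).insert _)

lemma finite_cover_open {ι : Type*} {T : Set ι} (hT : T.Finite) (F : ι → Set (ℝ×ℝ)) :
    ∀ U : Set (ℝ×ℝ), IsOpen U → U.Nonempty → (U ⊆ ⋃ i ∈ T, F i) →
    (∀ i ∈ T, IsClosed (F i)) →
    ∃ i ∈ T, ∃ z ε, 0 < ε ∧ Metric.ball z ε ⊆ U ∩ F i := by
  refine Set.Finite.induction_on (motive := fun T _ => ∀ U : Set (ℝ×ℝ), IsOpen U → U.Nonempty →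
      (U ⊆ ⋃ i ∈ T, F i) → (∀ i ∈ T, IsClosed (F i)) →
      ∃ i ∈ T, ∃ z ε, 0 < ε ∧ Metric.ball z ε ⊆ U ∩ F i) T hT ?_ ?_
  ·
    intro U hU hne hcov _
    obtain ⟨x, hx⟩ := hne
    simpa using hcov hx
  · intro a T' ha hT' ih
    intro U hU hne hcov hcl
    rcases (U \ F a).eq_empty_or_nonempty with hem | hne'
    · -- U ⊆ F a
      have hsub : U ⊆ F a := by
        intro x hx
        by_contra hxa
        exact (Set.eq_empty_iff_forall_notMem.mp hem x) ⟨hx, hxa⟩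
      obtain ⟨z, hz⟩ := hne
      obtain ⟨ε, hε, hball⟩ := Metric.isOpen_iff.mp hU z hz
      exact ⟨a, Set.mem_insert _ _, z, ε, hε, fun w hw => ⟨hball hw, hsub (hball hw)⟩⟩
    · have hU' : IsOpen (U \ F a) := hU.sdiff (hcl a (Set.mem_insert _ _))
      have hcov' : U \ F a ⊆ ⋃ i ∈ T', F i := by
        intro x hx
        have := hcov hx.1
        simp only [Set.mem_iUnion, Set.mem_insert_iff] at this ⊢
        obtain ⟨i, hi, hxi⟩ := this
        rcases hi with rfl | hi
        · exact absurd hxi hx.2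
        · exact ⟨i, hi, hxi⟩
      have hcl' : ∀ i ∈ T', IsClosed (F i) := fun i hi => hcl i (Set.mem_insert_of_mem _ hi)
      obtain ⟨i, hi, z, ε, hε, hball⟩ := ih (U \ F a) hU' hne' hcov' hcl'
      exact ⟨i, Set.mem_insert_of_mem _ hi, z, ε, hε,
        fun w hw => ⟨(hball hw).1.1, (hball hw).2⟩⟩

/-- key extraction lemma: from the hypothesis and any nonempty open R,
get a single (v,k,s) and a ball inside R on which the functional equation holds. -/
lemma key_box (φ : ℝ → ℝ) (hφ : Continuous φ) (S : Set ℝ) (hS : S.Finite) (N : ℤ)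
    (hyp : ∀ x y : ℝ, ∃ v ∈ Vfam, ∃ k : Fin 4 → ℤ,
      Function.Injective k ∧ (∀ j, 1 ≤ k j ∧ k j ≤ N) ∧
      (∑ j : Fin 4, v j * φ (x + (k j : ℝ) * y)) ∈ S)
    (R : Set (ℝ×ℝ)) (hR : IsOpen R) (hRne : R.Nonempty) :
    ∃ v ∈ Vfam, ∃ k : Fin 4 → ℤ, Function.Injective k ∧ (∀ j, 1 ≤ k j ∧ k j ≤ N) ∧
      ∃ s ∈ S, ∃ z : ℝ × ℝ, ∃ ε : ℝ, 0 < ε ∧ Metric.ball z ε ⊆ R ∧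
      ∀ x y : ℝ, |x - z.1| < ε → |y - z.2| < ε →
        (∑ j : Fin 4, v j * φ (x + (k j : ℝ) * y)) = s := by
  classical
  set ι := (Fin 4 → ℝ) × (Fin 4 → ℤ) × ℝ
  set T : Set ι := {t | t.1 ∈ Vfam ∧ Function.Injective t.2.1 ∧
    (∀ j, 1 ≤ t.2.1 j ∧ t.2.1 j ≤ N) ∧ t.2.2 ∈ S} with hT
  have hTfin : T.Finite := by
    have h1 : T ⊆ Vfam ×ˢ (Set.pi Set.univ (fun _ : Fin 4 => Set.Icc (1:ℤ) N) ×ˢ S) := by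
      intro t ht
      refine ⟨ht.1, ?_, ht.2.2.2⟩
      intro j _
      exact Set.mem_Icc.mpr ⟨(ht.2.2.1 j).1, (ht.2.2.1 j).2⟩
    exact Set.Finite.subset (Set.Finite.prod Vfam_finite (Set.Finite.prod
      (Set.Finite.pi (fun _ => Set.finite_Icc 1 N)) hS)) h1
  set F : ι → Set (ℝ × ℝ) := fun t =>
    {z : ℝ × ℝ | (∑ j : Fin 4, t.1 j * φ (z.1 + (t.2.1 j : ℝ) * z.2)) = t.2.2} with hF
  have hFcl : ∀ t ∈ T, IsClosed (F t) := by
    intro t _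
    apply isClosed_eq _ continuous_const
    apply continuous_finset_sum
    intro j _
    exact continuous_const.mul (hφ.comp (continuous_fst.add (continuous_const.mul continuous_snd)))
  have hcov : R ⊆ ⋃ i ∈ T, F i := by
    intro z _
    obtain ⟨v, hv, k, hinj, hbd, hmem⟩ := hyp z.1 z.2
    simp only [Set.mem_iUnion]
    exact ⟨(v, k, ∑ j : Fin 4, v j * φ (z.1 + (k j : ℝ) * z.2)),
      ⟨hv, hinj, hbd, hmem⟩, rfl⟩
  obtain ⟨⟨v, k, s⟩, htmem, z, ε, hε, hball⟩ := finite_cover_open hTfin F R hR hRne hcov hFcl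
  obtain ⟨hv, hinj, hbd, hs⟩ := htmem
  refine ⟨v, hv, k, hinj, hbd, s, hs, z, ε, hε, fun w hw => (hball hw).1, ?_⟩
  intro x y hx hy
  have hmem : (x, y) ∈ Metric.ball z ε := by
    rw [Metric.mem_ball, Prod.dist_eq, max_lt_iff]
    exact ⟨by rwa [Real.dist_eq], by rwa [Real.dist_eq]⟩
  exact (hball hmem).2

set_option maxHeartbeats 12000000 in
lemma pass1 (φ : ℝ → ℝ) (hφ : Continuous φ) (S : Set ℝ) (hS : S.Finite) (N : ℤ) (hN : 4 ≤ N)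
    (hyp : ∀ x y : ℝ, ∃ v ∈ Vfam, ∃ k : Fin 4 → ℤ,
      Function.Injective k ∧ (∀ j, 1 ≤ k j ∧ k j ≤ N) ∧
      (∑ j : Fin 4, v j * φ (x + (k j : ℝ) * y)) ∈ S)
    (a b : ℝ) (hab : a < b) :
    ∃ c d : ℝ, c < d ∧ Set.Ioo c d ⊆ Set.Ioo a b ∧
      ∃ p q r : ℝ, ∀ t ∈ Set.Ioo c d, φ t = p * t^2 + q * t + r := by
  classical
  -- the open region R where all relevant arguments stay inside (a,b)
  set R : Set (ℝ×ℝ) := {z | ∀ m : ℤ, 1 ≤ m → m ≤ N → z.1 + (m:ℝ) * z.2 ∈ Set.Ioo a b}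
    with hRdef
  have hRopen : IsOpen R := by
    have : R = ⋂ m ∈ Finset.Icc (1:ℤ) N, {z : ℝ×ℝ | z.1 + (m:ℝ) * z.2 ∈ Set.Ioo a b} := by
      ext w
      simp only [hRdef, Set.mem_setOf_eq, Set.mem_iInter, Finset.mem_Icc]
      constructor
      · intro h m hm; exact h m hm.1 hm.2
      · intro h m h1 h2; exact h m ⟨h1, h2⟩
    rw [this]
    apply isOpen_biInter_finset
    intro m _
    exact IsOpen.preimage (by continuity) isOpen_Ioo
  have hRne : R.Nonempty := by
    refine ⟨((a+b)/2, 0), ?_⟩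
    intro m _ _
    simp only []
    constructor <;> simp <;> linarith
  obtain ⟨v, hv, k, hinj, hbd, s, hs, z, ε, hε, hsub, heq⟩ :=
    key_box φ hφ S hS N hyp R hRopen hRne
  -- notation
  set x₁ := z.1 with hx₁
  set y₁ := z.2 with hy₁
  set K0 := ((k 0 : ℤ) : ℝ) with hK0def
  set K1 := ((k 1 : ℤ) : ℝ) with hK1def
  set K2 := ((k 2 : ℤ) : ℝ) with hK2def
  set K3 := ((k 3 : ℤ) : ℝ) with hK3def
  have hNR : (4:ℝ) ≤ (N:ℝ) := by exact_mod_cast hN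
  have hKlb : ∀ j : Fin 4, (1:ℝ) ≤ ((k j : ℤ):ℝ) := fun j => by exact_mod_cast (hbd j).1
  have hKub : ∀ j : Fin 4, ((k j : ℤ):ℝ) ≤ (N:ℝ) := fun j => by exact_mod_cast (hbd j).2
  have hKd : ∀ i j : Fin 4, i ≠ j → (1:ℝ) ≤ |((k i : ℤ):ℝ) - ((k j : ℤ):ℝ)| := by
    intro i j hij
    have h1 : (1:ℤ) ≤ |k i - k j| := Int.one_le_abs (sub_ne_zero.mpr (fun h => hij (hinj h)))
    have h2 : ((1:ℤ):ℝ) ≤ ((|k i - k j| : ℤ) : ℝ) := Int.cast_le.mpr h1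
    push_cast at h2
    convert h2 using 2
  set ρ₀ := ε/(4*((N:ℝ)+1)) with hρ₀def
  have hN1 : (0:ℝ) < (N:ℝ)+1 := by linarith
  have hρ₀ : 0 < ρ₀ := by apply div_pos hε; linarith
  have hρε : ρ₀ * (4*((N:ℝ)+1)) = ε := by
    rw [hρ₀def]; field_simp
  have hρ₀ε : ρ₀ < ε := by nlinarith
  -- all points of a small interval around x₁ + K j y₁ are in (a,b)
  have hIoo : ∀ x y : ℝ, |x - x₁| < ε → |y - y₁| < ε → ∀ j : Fin 4,
      x + ((k j : ℤ):ℝ) * y ∈ Set.Ioo a b := by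
    intro x y hx hy j
    have hmem : (x, y) ∈ Metric.ball z ε := by
      rw [Metric.mem_ball, Prod.dist_eq, max_lt_iff]
      exact ⟨by rwa [Real.dist_eq], by rwa [Real.dist_eq]⟩
    exact hsub hmem (k j) (hbd j).1 (hbd j).2
  have hsubInt : ∀ (j : Fin 4) (ρ' : ℝ), 0 < ρ' → ρ' ≤ ρ₀ →
      Set.Ioo (x₁ + ((k j : ℤ):ℝ)*y₁ - ρ') (x₁ + ((k j : ℤ):ℝ)*y₁ + ρ') ⊆ Set.Ioo a b := by
    intro j ρ' hρ' hρ'le t ht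
    have h1 : |t - ((k j : ℤ):ℝ)*y₁ - x₁| < ε := by
      rw [abs_lt]; constructor <;> [linarith [ht.1, hρ₀ε]; linarith [ht.2, hρ₀ε]]
    have h2 : |y₁ - y₁| < ε := by simpa using hε
    have := hIoo (t - ((k j : ℤ):ℝ)*y₁) y₁ h1 h2 j
    have harg : t - ((k j : ℤ):ℝ)*y₁ + ((k j : ℤ):ℝ)*y₁ = t := by ring
    rwa [harg] at this
  -- case analysis on v
  have hv' : v = ![1,1,-1,-1] ∨ v = ![1,1,-2,0] ∨ v = ![1,-1,0,0] ∨ v = ![1,1,0,0] ∨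
      v = ![2,0,0,0] ∨ v = ![1,1,-1,0] ∨ v = ![1,0,0,0] := by
    simpa [Vfam, Set.mem_insert_iff, Set.mem_singleton_iff] using hv
  rcases hv' with rfl | rfl | rfl | rfl | rfl | rfl | rfl
  · -- v = (1,1,-1,-1)
    have heq' : ∀ x y : ℝ, |x - x₁| < ε → |y - y₁| < ε →
        φ (x + K0*y) + φ (x + K1*y) - φ (x + K2*y) - φ (x + K3*y) = s := by
      intro x y hx hy
      have := heq x y hx hy
      simp [Fin.sum_univ_four] at this
      linarith
    have he23 : (1:ℝ) ≤ |K2 - K3| := hKd 2 3 (by decide)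
    have he20 : (1:ℝ) ≤ |K2 - K0| := hKd 2 0 (by decide)
    have he21 : (1:ℝ) ≤ |K2 - K1| := hKd 2 1 (by decide)
    have hene23 : K2 - K3 ≠ 0 := by
      intro h; rw [h] at he23; simp at he23; linarith
    have hene20 : K2 - K0 ≠ 0 := by
      intro h; rw [h] at he20; simp at he20; linarith
    have hene21 : K2 - K1 ≠ 0 := by
      intro h; rw [h] at he21; simp at he21; linarith
    have key : ∀ u δ δ' : ℝ, |u - (x₁ + K2*y₁)| ≤ ρ₀ → |δ| ≤ ρ₀ → |δ'| ≤ ρ₀ →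
        φ (u + δ + δ') - φ (u + δ) - φ (u + δ') + φ u
        = -(φ ((x₁ + K3*y₁) + (K3-K1)*(δ/(K2-K1)) + (K3-K0)*(δ'/(K2-K0)))
            - φ ((x₁ + K3*y₁) + (K3-K1)*(δ/(K2-K1)))
            - φ ((x₁ + K3*y₁) + (K3-K0)*(δ'/(K2-K0)))
            + φ (x₁ + K3*y₁)) := by
      intro u δ δ' hu hδ hδ'
      set u₁ := x₁ + K2*y₁ with hu₁
      set w₁ := x₁ + K3*y₁ with hw₁
      set y := y₁ + (u - u₁)/(K2 - K3) with hy
      set x := u - K2*y with hx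
      set h := δ/(K2 - K1) with hhdef
      set g := δ'/(K2 - K0) with hgdef
      have hyd : |(u - u₁)/(K2 - K3)| ≤ ρ₀ := by
        rw [abs_div]
        calc |u - u₁| / |K2 - K3| ≤ |u - u₁| := div_le_self (abs_nonneg _) he23
          _ ≤ ρ₀ := hu
      have hhd : |h| ≤ ρ₀ := by
        rw [hhdef, abs_div]
        calc |δ| / |K2 - K1| ≤ |δ| := div_le_self (abs_nonneg _) he21
          _ ≤ ρ₀ := hδ
      have hgd : |g| ≤ ρ₀ := by
        rw [hgdef, abs_div]
        calc |δ'| / |K2 - K0| ≤ |δ'| := div_le_self (abs_nonneg _) he20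
          _ ≤ ρ₀ := hδ'
      have hK0abs : |K0| ≤ (N:ℝ) := by
        rw [abs_of_nonneg (by linarith [hKlb 0])]; exact hKub 0
      have hK1abs : |K1| ≤ (N:ℝ) := by
        rw [abs_of_nonneg (by linarith [hKlb 1])]; exact hKub 1
      have hK2abs : |K2| ≤ (N:ℝ) := by
        rw [abs_of_nonneg (by linarith [hKlb 2])]; exact hKub 2
      have hxd : |x - x₁| ≤ ρ₀ + (N:ℝ)*ρ₀ := by
        rw [hx, hy]
        have e1 : u - K2*(y₁ + (u - u₁)/(K2-K3)) - x₁
            = (u - u₁) - K2*((u - u₁)/(K2-K3)) := by rw [hu₁]; ring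
        rw [e1]
        have h2 : |K2*((u-u₁)/(K2-K3))| ≤ (N:ℝ)*ρ₀ := by
          rw [abs_mul]
          exact mul_le_mul hK2abs hyd (abs_nonneg _) (by linarith)
        calc |(u - u₁) - K2*((u-u₁)/(K2-K3))| ≤ |u-u₁| + |K2*((u-u₁)/(K2-K3))| := abs_sub _ _
          _ ≤ ρ₀ + (N:ℝ)*ρ₀ := add_le_add hu h2
      have hK1h : |K1*h| ≤ (N:ℝ)*ρ₀ := by
        rw [abs_mul]; exact mul_le_mul hK1abs hhd (abs_nonneg _) (by linarith)
      have hK0g : |K0*g| ≤ (N:ℝ)*ρ₀ := by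
        rw [abs_mul]; exact mul_le_mul hK0abs hgd (abs_nonneg _) (by linarith)
      have hyb : |y - y₁| < ε := by
        rw [hy]; simpa using lt_of_le_of_lt hyd hρ₀ε
      have hxb : |x - x₁| < ε := lt_of_le_of_lt hxd (by nlinarith)
      have hyd' : |y - y₁| ≤ ρ₀ := by rw [hy]; simpa using hyd
      have hybh : |y + h - y₁| < ε := by
        calc |y + h - y₁| ≤ |y - y₁| + |h| := by
              have e : y + h - y₁ = (y - y₁) + h := by ring
              rw [e]; exact abs_add_le _ _
          _ ≤ ρ₀ + ρ₀ := add_le_add hyd' hhd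
          _ < ε := by nlinarith
      have hybg : |y + g - y₁| < ε := by
        calc |y + g - y₁| ≤ |y - y₁| + |g| := by
              have e : y + g - y₁ = (y - y₁) + g := by ring
              rw [e]; exact abs_add_le _ _
          _ ≤ ρ₀ + ρ₀ := add_le_add hyd' hgd
          _ < ε := by nlinarith
      have hybhg : |y + h + g - y₁| < ε := by
        calc |y + h + g - y₁| ≤ |y - y₁| + |h| + |g| := by
              have e : y + h + g - y₁ = ((y - y₁) + h) + g := by ring
              rw [e]
              exact (abs_add_le _ _).trans (add_le_add (abs_add_le _ _) le_rfl)
          _ ≤ ρ₀ + ρ₀ + ρ₀ := by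
              exact add_le_add (add_le_add hyd' hhd) hgd
          _ < ε := by nlinarith
      have hxbh : |x - K1*h - x₁| < ε := by
        calc |x - K1*h - x₁| ≤ |x - x₁| + |K1*h| := by
              have e : x - K1*h - x₁ = (x - x₁) + -(K1*h) := by ring
              rw [e]; exact (abs_add_le _ _).trans (by rw [abs_neg])
          _ ≤ (ρ₀ + (N:ℝ)*ρ₀) + (N:ℝ)*ρ₀ := add_le_add hxd hK1h
          _ < ε := by nlinarith
      have hxbg : |x - K0*g - x₁| < ε := by
        calc |x - K0*g - x₁| ≤ |x - x₁| + |K0*g| := by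
              have e : x - K0*g - x₁ = (x - x₁) + -(K0*g) := by ring
              rw [e]; exact (abs_add_le _ _).trans (by rw [abs_neg])
          _ ≤ (ρ₀ + (N:ℝ)*ρ₀) + (N:ℝ)*ρ₀ := add_le_add hxd hK0g
          _ < ε := by nlinarith
      have hxbhg : |x - K1*h - K0*g - x₁| < ε := by
        calc |x - K1*h - K0*g - x₁| ≤ |x - x₁| + |K1*h| + |K0*g| := by
              have e : x - K1*h - K0*g - x₁ = ((x - x₁) + -(K1*h)) + -(K0*g) := by ring
              rw [e]
              refine (abs_add_le _ _).trans ?_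
              rw [abs_neg]
              exact add_le_add ((abs_add_le _ _).trans (by rw [abs_neg])) le_rfl
          _ ≤ ((ρ₀ + (N:ℝ)*ρ₀) + (N:ℝ)*ρ₀) + (N:ℝ)*ρ₀ := add_le_add (add_le_add hxd hK1h) hK0g
          _ < ε := by nlinarith
      have hu2 : x + K2*y = u := by rw [hx]; ring
      have hw3 : x + K3*y = w₁ := by
        rw [hx, hy, hu₁, hw₁]
        field_simp
        ring
      have hh2 : (K2 - K1)*h = δ := by rw [hhdef]; field_simp
      have hg2 : (K2 - K0)*g = δ' := by rw [hgdef]; field_simp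
      have A00 := heq' x y hxb hyb
      have A10 := heq' (x - K1*h) (y + h) hxbh hybh
      have A01 := heq' (x - K0*g) (y + g) hxbg hybg
      have A11 := heq' (x - K1*h - K0*g) (y + h + g) hxbhg hybhg
      rw [hu2, hw3] at A00
      rw [show x - K1*h + K0*(y+h) = (x + K0*y) + (K0-K1)*h by ring,
          show x - K1*h + K1*(y+h) = x + K1*y by ring,
          show x - K1*h + K2*(y+h) = u + δ by linear_combination hu2 + hh2,
          show x - K1*h + K3*(y+h) = w₁ + (K3-K1)*h by linear_combination hw3] at A10
      rw [show x - K0*g + K0*(y+g) = x + K0*y by ring,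
          show x - K0*g + K1*(y+g) = (x + K1*y) + (K1-K0)*g by ring,
          show x - K0*g + K2*(y+g) = u + δ' by linear_combination hu2 + hg2,
          show x - K0*g + K3*(y+g) = w₁ + (K3-K0)*g by linear_combination hw3] at A01
      rw [show x - K1*h - K0*g + K0*(y+h+g) = (x + K0*y) + (K0-K1)*h by ring,
          show x - K1*h - K0*g + K1*(y+h+g) = (x + K1*y) + (K1-K0)*g by ring,
          show x - K1*h - K0*g + K2*(y+h+g) = u + δ + δ' by
            linear_combination hu2 + hh2 + hg2,
          show x - K1*h - K0*g + K3*(y+h+g) = w₁ + (K3-K1)*h + (K3-K0)*g by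
            linear_combination hw3] at A11
      linarith
    have H : ∀ u u' δ δ' : ℝ, |u - (x₁ + K2*y₁)| ≤ ρ₀ → |u' - (x₁ + K2*y₁)| ≤ ρ₀ →
        |δ| ≤ ρ₀ → |δ'| ≤ ρ₀ →
        φ (u + δ + δ') - φ (u + δ) - φ (u + δ') + φ u
        = φ (u' + δ + δ') - φ (u' + δ) - φ (u' + δ') + φ u' := by
      intro u u' δ δ' hu hu' hδ hδ'
      rw [key u δ δ' hu hδ hδ', key u' δ δ' hu' hδ hδ']
    obtain ⟨p, q, r, hpqr⟩ := secdiff_quad φ hφ (x₁ + K2*y₁) ρ₀ hρ₀ H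
    refine ⟨x₁ + K2*y₁ - ρ₀/16, x₁ + K2*y₁ + ρ₀/16, by linarith,
      ?_, p, q, r, ?_⟩
    · intro t ht
      exact hsubInt 2 (ρ₀/16) (by linarith) (by linarith) ht
    · intro t ht
      exact hpqr t (by rw [abs_le]; constructor <;> [linarith [ht.1]; linarith [ht.2]])
  · -- v = (1,1,-2,0)
    have heq' : ∀ x y : ℝ, |x - x₁| < ε → |y - y₁| < ε →
        φ (x + K0*y) + φ (x + K1*y) - 2 * φ (x + K2*y) = s := by
      intro x y hx hy
      have := heq x y hx hy
      simp [Fin.sum_univ_four] at this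
      linarith
    have he20 : (1:ℝ) ≤ |K2 - K0| := hKd 2 0 (by decide)
    have he21 : (1:ℝ) ≤ |K2 - K1| := hKd 2 1 (by decide)
    have hene20 : K2 - K0 ≠ 0 := by
      intro h; rw [h] at he20; simp at he20; linarith
    have hene21 : K2 - K1 ≠ 0 := by
      intro h; rw [h] at he21; simp at he21; linarith
    have key : ∀ u δ : ℝ, |u - (x₁ + K2*y₁)| ≤ ρ₀ → |δ| ≤ ρ₀ →
        φ (u + δ) - φ u = (φ ((x₁ + K0*y₁) + (K0-K1)*(δ/(K2-K1))) - φ (x₁ + K0*y₁))/2 := by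
      intro u δ hu hδ
      set u₁ := x₁ + K2*y₁ with hu₁
      set y := y₁ + (u - u₁)/(K2 - K0) with hy
      set x := u - K2*y with hx
      set h := δ/(K2 - K1) with hhdef
      have hyd : |(u - u₁)/(K2 - K0)| ≤ ρ₀ := by
        rw [abs_div]
        calc |u - u₁| / |K2 - K0| ≤ |u - u₁| := div_le_self (abs_nonneg _) he20
          _ ≤ ρ₀ := hu
      have hhd : |h| ≤ ρ₀ := by
        rw [hhdef, abs_div]
        calc |δ| / |K2 - K1| ≤ |δ| := div_le_self (abs_nonneg _) he21
          _ ≤ ρ₀ := hδ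
      have hK1abs : |K1| ≤ (N:ℝ) := by
        rw [abs_of_nonneg (by linarith [hKlb 1])]; exact hKub 1
      have hK2abs : |K2| ≤ (N:ℝ) := by
        rw [abs_of_nonneg (by linarith [hKlb 2])]; exact hKub 2
      have hxd : |x - x₁| ≤ ρ₀ + (N:ℝ)*ρ₀ := by
        rw [hx, hy]
        have e1 : u - K2*(y₁ + (u - u₁)/(K2-K0)) - x₁
            = (u - u₁) - K2*((u - u₁)/(K2-K0)) := by rw [hu₁]; ring
        rw [e1]
        have h2 : |K2*((u-u₁)/(K2-K0))| ≤ (N:ℝ)*ρ₀ := by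
          rw [abs_mul]
          exact mul_le_mul hK2abs hyd (abs_nonneg _) (by linarith)
        calc |(u - u₁) - K2*((u-u₁)/(K2-K0))| ≤ |u-u₁| + |K2*((u-u₁)/(K2-K0))| := abs_sub _ _
          _ ≤ ρ₀ + (N:ℝ)*ρ₀ := add_le_add hu h2
      have hyb : |y - y₁| < ε := by
        rw [hy]; simpa using lt_of_le_of_lt hyd hρ₀ε
      have hxb : |x - x₁| < ε := lt_of_le_of_lt hxd (by nlinarith)
      have hyb2 : |y + h - y₁| < ε := by
        calc |y + h - y₁| ≤ |y - y₁| + |h| := by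
              have : y + h - y₁ = (y - y₁) + h := by ring
              rw [this]; exact abs_add_le _ _
          _ ≤ ρ₀ + ρ₀ := add_le_add (by rw [hy]; simpa using hyd) hhd
          _ < ε := by nlinarith
      have hxb2 : |x - K1*h - x₁| < ε := by
        calc |x - K1*h - x₁| ≤ |x - x₁| + |K1*h| := by
              have : x - K1*h - x₁ = (x - x₁) + -(K1*h) := by ring
              rw [this]
              exact (abs_add_le _ _).trans (by rw [abs_neg])
          _ ≤ (ρ₀ + (N:ℝ)*ρ₀) + (N:ℝ)*ρ₀ := by
              apply add_le_add hxd
              rw [abs_mul]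
              exact mul_le_mul hK1abs hhd (abs_nonneg _) (by linarith)
          _ < ε := by nlinarith
      have hu2 : x + K2*y = u := by rw [hx]; ring
      have ha0 : x + K0*y = x₁ + K0*y₁ := by
        rw [hx, hy, hu₁]
        field_simp
        ring
      have hh2 : (K2 - K1)*h = δ := by
        rw [hhdef]
        field_simp
      have A0 := heq' x y hxb hyb
      have A1 := heq' (x - K1*h) (y + h) hxb2 hyb2
      rw [show x - K1*h + K0*(y+h) = (x₁ + K0*y₁) + (K0-K1)*h by linear_combination ha0,
          show x - K1*h + K1*(y+h) = x + K1*y by ring,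
          show x - K1*h + K2*(y+h) = u + δ by linear_combination hu2 + hh2] at A1
      rw [ha0, hu2] at A0
      linarith
    have H : ∀ u u' δ : ℝ, |u - (x₁ + K2*y₁)| ≤ ρ₀ → |u' - (x₁ + K2*y₁)| ≤ ρ₀ → |δ| ≤ ρ₀ →
        φ (u + δ) - φ u = φ (u' + δ) - φ u' := by
      intro u u' δ hu hu' hδ
      rw [key u δ hu hδ, key u' δ hu' hδ]
    obtain ⟨p, q, hpq⟩ := incr_affine φ hφ (x₁ + K2*y₁) ρ₀ hρ₀ H
    refine ⟨x₁ + K2*y₁ - ρ₀/2, x₁ + K2*y₁ + ρ₀/2, by linarith,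
      ?_, 0, p, q, ?_⟩
    · intro t ht
      exact hsubInt 2 (ρ₀/2) (by linarith) (by linarith) ht
    · intro t ht
      rw [hpq t (by rw [abs_le]; constructor <;> [linarith [ht.1]; linarith [ht.2]])]
      ring
  · -- v = (1,-1,0,0)
    have heq' : ∀ x y : ℝ, |x - x₁| < ε → |y - y₁| < ε →
        φ (x + K0*y) - φ (x + K1*y) = s := by
      intro x y hx hy
      have := heq x y hx hy
      simp [Fin.sum_univ_four] at this
      linarith
    have hcl : ∀ t : ℝ, |t - (x₁ + K0*y₁)| ≤ ρ₀ → φ t = s + φ (x₁ + K1*y₁) := by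
      intro t ht
      have he01 : (1:ℝ) ≤ |K0 - K1| := hKd 0 1 (by decide)
      have hene : K0 - K1 ≠ 0 := by
        intro h; rw [h] at he01; simp at he01; linarith
      set u₁ := x₁ + K0*y₁ with hu₁
      set y := y₁ + (t - u₁)/(K0 - K1) with hy
      set x := t - K0*y with hx
      have hyd : |(t - u₁)/(K0 - K1)| ≤ ρ₀ := by
        rw [abs_div]
        calc |t - u₁| / |K0 - K1| ≤ |t - u₁| := div_le_self (abs_nonneg _) he01
          _ ≤ ρ₀ := ht
      have hyb : |y - y₁| < ε := by
        rw [hy]; simpa using lt_of_le_of_lt hyd hρ₀ε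
      have hxb : |x - x₁| < ε := by
        rw [hx, hy]
        have e1 : t - K0*(y₁ + (t - u₁)/(K0-K1)) - x₁
            = (t - u₁) - K0*((t - u₁)/(K0-K1)) := by rw [hu₁]; ring
        rw [e1]
        have h2 : |K0*((t-u₁)/(K0-K1))| ≤ (N:ℝ)*ρ₀ := by
          rw [abs_mul]
          apply mul_le_mul (by rw [abs_of_nonneg (by linarith [hKlb 0])]; exact hKub 0)
            hyd (abs_nonneg _) (by linarith)
        calc |(t - u₁) - K0*((t-u₁)/(K0-K1))| ≤ |t-u₁| + |K0*((t-u₁)/(K0-K1))| := abs_sub _ _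
          _ ≤ ρ₀ + (N:ℝ)*ρ₀ := add_le_add ht h2
          _ < ε := by nlinarith
      have := heq' x y hxb hyb
      have e2 : x + K0*y = t := by rw [hx]; ring
      have e3 : x + K1*y = x₁ + K1*y₁ := by
        rw [hx, hy, hu₁]
        field_simp
        ring
      rw [e2, e3] at this
      linarith
    refine ⟨x₁ + K0*y₁ - ρ₀, x₁ + K0*y₁ + ρ₀, by linarith, hsubInt 0 ρ₀ hρ₀ le_rfl,
      0, 0, s + φ (x₁ + K1*y₁), ?_⟩
    intro t ht
    rw [hcl t (by rw [abs_le]; constructor <;> [linarith [ht.1]; linarith [ht.2]])]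
    ring
  · -- v = (1,1,0,0)
    have heq' : ∀ x y : ℝ, |x - x₁| < ε → |y - y₁| < ε →
        φ (x + K0*y) + φ (x + K1*y) = s := by
      intro x y hx hy
      have := heq x y hx hy
      simp [Fin.sum_univ_four] at this
      linarith
    have hcl : ∀ t : ℝ, |t - (x₁ + K0*y₁)| ≤ ρ₀ → φ t = s - φ (x₁ + K1*y₁) := by
      intro t ht
      have he01 : (1:ℝ) ≤ |K0 - K1| := hKd 0 1 (by decide)
      have hene : K0 - K1 ≠ 0 := by
        intro h; rw [h] at he01; simp at he01; linarith
      set u₁ := x₁ + K0*y₁ with hu₁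
      set y := y₁ + (t - u₁)/(K0 - K1) with hy
      set x := t - K0*y with hx
      have hyd : |(t - u₁)/(K0 - K1)| ≤ ρ₀ := by
        rw [abs_div]
        calc |t - u₁| / |K0 - K1| ≤ |t - u₁| := div_le_self (abs_nonneg _) he01
          _ ≤ ρ₀ := ht
      have hyb : |y - y₁| < ε := by
        rw [hy]; simpa using lt_of_le_of_lt hyd hρ₀ε
      have hxb : |x - x₁| < ε := by
        rw [hx, hy]
        have e1 : t - K0*(y₁ + (t - u₁)/(K0-K1)) - x₁
            = (t - u₁) - K0*((t - u₁)/(K0-K1)) := by rw [hu₁]; ring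
        rw [e1]
        have h2 : |K0*((t-u₁)/(K0-K1))| ≤ (N:ℝ)*ρ₀ := by
          rw [abs_mul]
          apply mul_le_mul (by rw [abs_of_nonneg (by linarith [hKlb 0])]; exact hKub 0)
            hyd (abs_nonneg _) (by linarith)
        calc |(t - u₁) - K0*((t-u₁)/(K0-K1))| ≤ |t-u₁| + |K0*((t-u₁)/(K0-K1))| := abs_sub _ _
          _ ≤ ρ₀ + (N:ℝ)*ρ₀ := add_le_add ht h2
          _ < ε := by nlinarith
      have := heq' x y hxb hyb
      have e2 : x + K0*y = t := by rw [hx]; ring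
      have e3 : x + K1*y = x₁ + K1*y₁ := by
        rw [hx, hy, hu₁]
        field_simp
        ring
      rw [e2, e3] at this
      linarith
    refine ⟨x₁ + K0*y₁ - ρ₀, x₁ + K0*y₁ + ρ₀, by linarith, hsubInt 0 ρ₀ hρ₀ le_rfl,
      0, 0, s - φ (x₁ + K1*y₁), ?_⟩
    intro t ht
    rw [hcl t (by rw [abs_le]; constructor <;> [linarith [ht.1]; linarith [ht.2]])]
    ring
  · -- v = (2,0,0,0)
    have heq' : ∀ x y : ℝ, |x - x₁| < ε → |y - y₁| < ε → 2 * φ (x + K0*y) = s := by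
      intro x y hx hy
      have := heq x y hx hy
      simp [Fin.sum_univ_four] at this
      linarith
    refine ⟨x₁ + K0*y₁ - ρ₀, x₁ + K0*y₁ + ρ₀, by linarith, hsubInt 0 ρ₀ hρ₀ le_rfl,
      0, 0, s/2, ?_⟩
    intro t ht
    have h1 : |t - K0*y₁ - x₁| < ε := by
      rw [abs_lt]; constructor <;> [linarith [ht.1, hρ₀ε]; linarith [ht.2, hρ₀ε]]
    have h2 : |y₁ - y₁| < ε := by simpa using hε
    have := heq' (t - K0*y₁) y₁ h1 h2
    have harg : t - K0*y₁ + K0*y₁ = t := by ring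
    rw [harg] at this
    linarith
  · -- v = (1,1,-1,0)
    have heq' : ∀ x y : ℝ, |x - x₁| < ε → |y - y₁| < ε →
        φ (x + K0*y) + φ (x + K1*y) - φ (x + K2*y) = s := by
      intro x y hx hy
      have := heq x y hx hy
      simp [Fin.sum_univ_four] at this
      linarith
    have he20 : (1:ℝ) ≤ |K2 - K0| := hKd 2 0 (by decide)
    have he21 : (1:ℝ) ≤ |K2 - K1| := hKd 2 1 (by decide)
    have hene20 : K2 - K0 ≠ 0 := by
      intro h; rw [h] at he20; simp at he20; linarith
    have hene21 : K2 - K1 ≠ 0 := by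
      intro h; rw [h] at he21; simp at he21; linarith
    have key : ∀ u δ : ℝ, |u - (x₁ + K2*y₁)| ≤ ρ₀ → |δ| ≤ ρ₀ →
        φ (u + δ) - φ u = φ ((x₁ + K0*y₁) + (K0-K1)*(δ/(K2-K1))) - φ (x₁ + K0*y₁) := by
      intro u δ hu hδ
      set u₁ := x₁ + K2*y₁ with hu₁
      set y := y₁ + (u - u₁)/(K2 - K0) with hy
      set x := u - K2*y with hx
      set h := δ/(K2 - K1) with hhdef
      have hyd : |(u - u₁)/(K2 - K0)| ≤ ρ₀ := by
        rw [abs_div]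
        calc |u - u₁| / |K2 - K0| ≤ |u - u₁| := div_le_self (abs_nonneg _) he20
          _ ≤ ρ₀ := hu
      have hhd : |h| ≤ ρ₀ := by
        rw [hhdef, abs_div]
        calc |δ| / |K2 - K1| ≤ |δ| := div_le_self (abs_nonneg _) he21
          _ ≤ ρ₀ := hδ
      have hK1abs : |K1| ≤ (N:ℝ) := by
        rw [abs_of_nonneg (by linarith [hKlb 1])]; exact hKub 1
      have hK2abs : |K2| ≤ (N:ℝ) := by
        rw [abs_of_nonneg (by linarith [hKlb 2])]; exact hKub 2
      have hxd : |x - x₁| ≤ ρ₀ + (N:ℝ)*ρ₀ := by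
        rw [hx, hy]
        have e1 : u - K2*(y₁ + (u - u₁)/(K2-K0)) - x₁
            = (u - u₁) - K2*((u - u₁)/(K2-K0)) := by rw [hu₁]; ring
        rw [e1]
        have h2 : |K2*((u-u₁)/(K2-K0))| ≤ (N:ℝ)*ρ₀ := by
          rw [abs_mul]
          exact mul_le_mul hK2abs hyd (abs_nonneg _) (by linarith)
        calc |(u - u₁) - K2*((u-u₁)/(K2-K0))| ≤ |u-u₁| + |K2*((u-u₁)/(K2-K0))| := abs_sub _ _
          _ ≤ ρ₀ + (N:ℝ)*ρ₀ := add_le_add hu h2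
      have hyb : |y - y₁| < ε := by
        rw [hy]; simpa using lt_of_le_of_lt hyd hρ₀ε
      have hxb : |x - x₁| < ε := lt_of_le_of_lt hxd (by nlinarith)
      have hyb2 : |y + h - y₁| < ε := by
        calc |y + h - y₁| ≤ |y - y₁| + |h| := by
              have : y + h - y₁ = (y - y₁) + h := by ring
              rw [this]; exact abs_add_le _ _
          _ ≤ ρ₀ + ρ₀ := add_le_add (by rw [hy]; simpa using hyd) hhd
          _ < ε := by nlinarith
      have hxb2 : |x - K1*h - x₁| < ε := by
        calc |x - K1*h - x₁| ≤ |x - x₁| + |K1*h| := by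
              have : x - K1*h - x₁ = (x - x₁) + -(K1*h) := by ring
              rw [this]
              exact (abs_add_le _ _).trans (by rw [abs_neg])
          _ ≤ (ρ₀ + (N:ℝ)*ρ₀) + (N:ℝ)*ρ₀ := by
              apply add_le_add hxd
              rw [abs_mul]
              exact mul_le_mul hK1abs hhd (abs_nonneg _) (by linarith)
          _ < ε := by nlinarith
      have hu2 : x + K2*y = u := by rw [hx]; ring
      have ha0 : x + K0*y = x₁ + K0*y₁ := by
        rw [hx, hy, hu₁]
        field_simp
        ring
      have hh2 : (K2 - K1)*h = δ := by
        rw [hhdef]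
        field_simp
      have A0 := heq' x y hxb hyb
      have A1 := heq' (x - K1*h) (y + h) hxb2 hyb2
      rw [show x - K1*h + K0*(y+h) = (x₁ + K0*y₁) + (K0-K1)*h by linear_combination ha0,
          show x - K1*h + K1*(y+h) = x + K1*y by ring,
          show x - K1*h + K2*(y+h) = u + δ by linear_combination hu2 + hh2] at A1
      rw [ha0, hu2] at A0
      linarith
    have H : ∀ u u' δ : ℝ, |u - (x₁ + K2*y₁)| ≤ ρ₀ → |u' - (x₁ + K2*y₁)| ≤ ρ₀ → |δ| ≤ ρ₀ →
        φ (u + δ) - φ u = φ (u' + δ) - φ u' := by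
      intro u u' δ hu hu' hδ
      rw [key u δ hu hδ, key u' δ hu' hδ]
    obtain ⟨p, q, hpq⟩ := incr_affine φ hφ (x₁ + K2*y₁) ρ₀ hρ₀ H
    refine ⟨x₁ + K2*y₁ - ρ₀/2, x₁ + K2*y₁ + ρ₀/2, by linarith,
      ?_, 0, p, q, ?_⟩
    · intro t ht
      exact hsubInt 2 (ρ₀/2) (by linarith) (by linarith) ht
    · intro t ht
      rw [hpq t (by rw [abs_le]; constructor <;> [linarith [ht.1]; linarith [ht.2]])]
      ring
  · -- v = (1,0,0,0)
    have heq' : ∀ x y : ℝ, |x - x₁| < ε → |y - y₁| < ε → φ (x + K0*y) = s := by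
      intro x y hx hy
      have := heq x y hx hy
      simp [Fin.sum_univ_four] at this
      linarith
    refine ⟨x₁ + K0*y₁ - ρ₀, x₁ + K0*y₁ + ρ₀, by linarith, hsubInt 0 ρ₀ hρ₀ le_rfl,
      0, 0, s, ?_⟩
    intro t ht
    have h1 : |t - K0*y₁ - x₁| < ε := by
      rw [abs_lt]; constructor <;> [linarith [ht.1, hρ₀ε]; linarith [ht.2, hρ₀ε]]
    have h2 : |y₁ - y₁| < ε := by simpa using hε
    have := heq' (t - K0*y₁) y₁ h1 h2
    have harg : t - K0*y₁ + K0*y₁ = t := by ring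
    rw [harg] at this
    linarith

set_option maxHeartbeats 4000000 in
lemma pass2 (φ : ℝ → ℝ) (hφ : Continuous φ) (S : Set ℝ) (hS : S.Finite) (N : ℤ) (hN : 4 ≤ N)
    (hyp : ∀ x y : ℝ, ∃ v ∈ Vfam, ∃ k : Fin 4 → ℤ,
      Function.Injective k ∧ (∀ j, 1 ≤ k j ∧ k j ≤ N) ∧
      (∑ j : Fin 4, v j * φ (x + (k j : ℝ) * y)) ∈ S)
    (c d p q r : ℝ) (hcd : c < d)
    (hq : ∀ t ∈ Set.Ioo c d, φ t = p * t^2 + q * t + r) : p = 0 := by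
  classical
  set R : Set (ℝ×ℝ) := {z | ∀ m : ℤ, 1 ≤ m → m ≤ N → z.1 + (m:ℝ) * z.2 ∈ Set.Ioo c d}
    with hRdef
  have hRopen : IsOpen R := by
    have : R = ⋂ m ∈ Finset.Icc (1:ℤ) N, {z : ℝ×ℝ | z.1 + (m:ℝ) * z.2 ∈ Set.Ioo c d} := by
      ext w
      simp only [hRdef, Set.mem_setOf_eq, Set.mem_iInter, Finset.mem_Icc]
      constructor
      · intro h m hm; exact h m hm.1 hm.2
      · intro h m h1 h2; exact h m ⟨h1, h2⟩
    rw [this]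
    apply isOpen_biInter_finset
    intro m _
    exact IsOpen.preimage (by continuity) isOpen_Ioo
  have hRne : R.Nonempty := by
    refine ⟨((c+d)/2, 0), ?_⟩
    intro m _ _
    simp only []
    constructor <;> simp <;> linarith
  obtain ⟨v, hv, k, hinj, hbd, s, hs, z, ε, hε, hsub, heq⟩ :=
    key_box φ hφ S hS N hyp R hRopen hRne
  set x₂ := z.1 with hx₂
  set y₂ := z.2 with hy₂
  set K0 := ((k 0 : ℤ) : ℝ) with hK0def
  set K1 := ((k 1 : ℤ) : ℝ) with hK1def
  set K2 := ((k 2 : ℤ) : ℝ) with hK2def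
  set K3 := ((k 3 : ℤ) : ℝ) with hK3def
  have hmem : ∀ x y : ℝ, |x - x₂| < ε → |y - y₂| < ε → ∀ j : Fin 4,
      x + ((k j : ℤ):ℝ) * y ∈ Set.Ioo c d := by
    intro x y hx hy j
    have hm : (x, y) ∈ Metric.ball z ε := by
      rw [Metric.mem_ball, Prod.dist_eq, max_lt_iff]
      exact ⟨by rwa [Real.dist_eq], by rwa [Real.dist_eq]⟩
    exact hsub hm (k j) (hbd j).1 (hbd j).2
  have hE : ∀ x y : ℝ, |x - x₂| < ε → |y - y₂| < ε →
      v 0 * (p*(x + K0*y)^2 + q*(x + K0*y) + r) + v 1 * (p*(x + K1*y)^2 + q*(x + K1*y) + r)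
      + v 2 * (p*(x + K2*y)^2 + q*(x + K2*y) + r) + v 3 * (p*(x + K3*y)^2 + q*(x + K3*y) + r)
      = s := by
    intro x y hx hy
    have e := heq x y hx hy
    rw [Fin.sum_univ_four] at e
    rw [hq _ (hmem x y hx hy 0), hq _ (hmem x y hx hy 1), hq _ (hmem x y hx hy 2),
      hq _ (hmem x y hx hy 3)] at e
    exact e
  have hb0 : |x₂ - x₂| < ε := by simpa using hε
  have hb0' : |y₂ - y₂| < ε := by simpa using hε
  have hbh : |x₂ + ε/2 - x₂| < ε := by
    rw [show x₂ + ε/2 - x₂ = ε/2 by ring, abs_of_nonneg (by linarith)]; linarith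
  have hbh' : |y₂ + ε/2 - y₂| < ε := by
    rw [show y₂ + ε/2 - y₂ = ε/2 by ring, abs_of_nonneg (by linarith)]; linarith
  have hbm' : |y₂ - ε/2 - y₂| < ε := by
    rw [show y₂ - ε/2 - y₂ = -(ε/2) by ring, abs_neg, abs_of_nonneg (by linarith)]; linarith
  have hεne : (ε/2 : ℝ) ≠ 0 := by positivity
  have hC2 : 2*(ε/2)^2 * (p*(v 0*K0^2 + v 1*K1^2 + v 2*K2^2 + v 3*K3^2)) = 0 := by
    linear_combination (hE x₂ (y₂ + ε/2) hb0 hbh') - 2*(hE x₂ y₂ hb0 hb0')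
      + (hE x₂ (y₂ - ε/2) hb0 hbm')
  have hB2 : 2*(ε/2)^2 * (p*(v 0*K0 + v 1*K1 + v 2*K2 + v 3*K3)) = 0 := by
    linear_combination (hE (x₂ + ε/2) (y₂ + ε/2) hbh hbh') - (hE (x₂ + ε/2) y₂ hbh hb0')
      - (hE x₂ (y₂ + ε/2) hb0 hbh') + (hE x₂ y₂ hb0 hb0')
  have hC : p*(v 0*K0^2 + v 1*K1^2 + v 2*K2^2 + v 3*K3^2) = 0 := by
    rcases mul_eq_zero.mp hC2 with h | h
    · exact absurd h (by positivity)
    · exact h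
  have hB : p*(v 0*K0 + v 1*K1 + v 2*K2 + v 3*K3) = 0 := by
    rcases mul_eq_zero.mp hB2 with h | h
    · exact absurd h (by positivity)
    · exact h
  clear hE heq hsub hC2 hB2
  -- integer facts
  have hne : ∀ i j : Fin 4, i ≠ j → k i ≠ k j := by
    intro i j hij h
    exact hij (hinj h)
  -- case analysis
  have hv' : v = ![1,1,-1,-1] ∨ v = ![1,1,-2,0] ∨ v = ![1,-1,0,0] ∨ v = ![1,1,0,0] ∨
      v = ![2,0,0,0] ∨ v = ![1,1,-1,0] ∨ v = ![1,0,0,0] := by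
    simpa [Vfam, Set.mem_insert_iff, Set.mem_singleton_iff] using hv
  rcases hv' with rfl | rfl | rfl | rfl | rfl | rfl | rfl <;>
    simp only [Matrix.cons_val_zero, Matrix.cons_val_one, Matrix.head_cons,
      Matrix.cons_val_two, Matrix.tail_cons, Matrix.cons_val_three] at hB hC
  · -- (1,1,-1,-1)
    by_contra hp
    have hσ : K0 + K1 - K2 - K3 = 0 := by
      rcases mul_eq_zero.mp (show p * (K0 + K1 - K2 - K3) = 0 by linear_combination hB)
        with h | h
      · exact absurd h hp
      · exact h
    have hτ : K0^2 + K1^2 - K2^2 - K3^2 = 0 := by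
      rcases mul_eq_zero.mp (show p * (K0^2 + K1^2 - K2^2 - K3^2) = 0 by linear_combination hC)
        with h | h
      · exact absurd h hp
      · exact h
    have hσZ : k 0 + k 1 - k 2 - k 3 = 0 := by simp only [hK0def, hK1def, hK2def, hK3def] at hσ; exact_mod_cast hσ
    have hτZ : (k 0)^2 + (k 1)^2 - (k 2)^2 - (k 3)^2 = 0 := by simp only [hK0def, hK1def, hK2def, hK3def] at hτ; exact_mod_cast hτ
    have h2 : 2*((k 0 - k 2)*(k 0 - k 3)) = 0 := by
      linear_combination hτZ + (k 0 - k 1 - k 2 - k 3)*hσZ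
    have h3 : (k 0 - k 2)*(k 0 - k 3) = 0 := by omega
    rcases mul_eq_zero.mp h3 with h | h
    · exact hne 0 2 (by decide) (by omega)
    · exact hne 0 3 (by decide) (by omega)
  · -- (1,1,-2,0)
    by_contra hp
    have hσ : K0 + K1 - 2*K2 = 0 := by
      rcases mul_eq_zero.mp (show p * (K0 + K1 - 2*K2) = 0 by linear_combination hB)
        with h | h
      · exact absurd h hp
      · exact h
    have hτ : K0^2 + K1^2 - 2*K2^2 = 0 := by
      rcases mul_eq_zero.mp (show p * (K0^2 + K1^2 - 2*K2^2) = 0 by linear_combination hC)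
        with h | h
      · exact absurd h hp
      · exact h
    have hσZ : k 0 + k 1 - 2*(k 2) = 0 := by simp only [hK0def, hK1def, hK2def] at hσ; exact_mod_cast hσ
    have hτZ : (k 0)^2 + (k 1)^2 - 2*(k 2)^2 = 0 := by simp only [hK0def, hK1def, hK2def] at hτ; exact_mod_cast hτ
    have h2 : (k 0 - k 1)^2 = 0 := by
      linear_combination 2*hτZ - (k 0 + k 1 + 2*(k 2))*hσZ
    have h3 : k 0 = k 1 := by
      have := pow_eq_zero_iff (n := 2) (by norm_num) |>.mp h2
      omega
    exact hne 0 1 (by decide) h3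
  · -- (1,-1,0,0)
    have hK01 : K0 - K1 ≠ 0 := by
      have h01 : (k 0 : ℝ) ≠ (k 1 : ℝ) := by
        exact_mod_cast hne 0 1 (by decide)
      rw [hK0def, hK1def]
      exact sub_ne_zero.mpr h01
    rcases mul_eq_zero.mp (show p * (K0 - K1) = 0 by linear_combination hB) with h | h
    · exact h
    · exact absurd h hK01
  · -- (1,1,0,0)
    have h1 : (1:ℝ) ≤ K0 := by rw [hK0def]; exact_mod_cast (hbd 0).1
    have h2 : (1:ℝ) ≤ K1 := by rw [hK1def]; exact_mod_cast (hbd 1).1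
    rcases mul_eq_zero.mp (show p * (K0 + K1) = 0 by linear_combination hB) with h | h
    · exact h
    · exact absurd h (by intro hcon; rw [hcon] at *; linarith)
  · -- (2,0,0,0)
    have h1 : (1:ℝ) ≤ K0 := by rw [hK0def]; exact_mod_cast (hbd 0).1
    rcases mul_eq_zero.mp (show p * (2*K0) = 0 by linear_combination hB) with h | h
    · exact h
    · exact absurd h (by intro hcon; linarith)
  · -- (1,1,-1,0)
    by_contra hp
    have hσ : K0 + K1 - K2 = 0 := by
      rcases mul_eq_zero.mp (show p * (K0 + K1 - K2) = 0 by linear_combination hB)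
        with h | h
      · exact absurd h hp
      · exact h
    have hτ : K0^2 + K1^2 - K2^2 = 0 := by
      rcases mul_eq_zero.mp (show p * (K0^2 + K1^2 - K2^2) = 0 by linear_combination hC)
        with h | h
      · exact absurd h hp
      · exact h
    have hσZ : k 0 + k 1 - k 2 = 0 := by simp only [hK0def, hK1def, hK2def] at hσ; exact_mod_cast hσ
    have hτZ : (k 0)^2 + (k 1)^2 - (k 2)^2 = 0 := by simp only [hK0def, hK1def, hK2def] at hτ; exact_mod_cast hτ
    have h2 : 2*((k 0)*(k 1)) = 0 := by
      linear_combination -hτZ + (k 0 + k 1 + k 2)*hσZ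
    have h3 : (k 0)*(k 1) = 0 := by omega
    rcases mul_eq_zero.mp h3 with h | h
    · have := (hbd 0).1; omega
    · have := (hbd 1).1; omega
  · -- (1,0,0,0)
    have h1 : (1:ℝ) ≤ K0 := by rw [hK0def]; exact_mod_cast (hbd 0).1
    rcases mul_eq_zero.mp (show p * K0 = 0 by linear_combination hB) with h | h
    · exact h
    · exact absurd h (by intro hcon; linarith)

end NLAux

theorem nonlin_nowhere_dense (φ : ℝ → ℝ) (hφ : Continuous φ)
    (S : Set ℝ) (hS : S.Finite) (N : ℤ) (hN : 4 ≤ N)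
    (hyp : ∀ x y : ℝ, ∃ v ∈ Vfam, ∃ k : Fin 4 → ℤ,
      Function.Injective k ∧ (∀ j, 1 ≤ k j ∧ k j ≤ N) ∧
      (∑ j : Fin 4, v j * φ (x + (k j : ℝ) * y)) ∈ S) :
    IsNowhereDense (NonlinSet φ) ∧
    ∀ a b : ℝ, a < b → ∃ c d : ℝ, c < d ∧ Set.Ioo c d ⊆ Set.Ioo a b ∧
      ∃ p q : ℝ, ∀ t ∈ Set.Ioo c d, φ t = p * t + q := by
  have main_sub : ∀ a b : ℝ, a < b → ∃ c d : ℝ, c < d ∧ Set.Ioo c d ⊆ Set.Ioo a b ∧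
      ∃ p q : ℝ, ∀ t ∈ Set.Ioo c d, φ t = p * t + q := by
    intro a b hab
    obtain ⟨c, d, hcd, hsub, p, q, r, hquad⟩ := NLAux.pass1 φ hφ S hS N hN hyp a b hab
    have hp0 : p = 0 := NLAux.pass2 φ hφ S hS N hN hyp c d p q r hcd hquad
    refine ⟨c, d, hcd, hsub, q, r, ?_⟩
    intro t ht
    have h := hquad t ht
    rw [hp0] at h
    linarith [h]
  refine ⟨?_, main_sub⟩
  have hopen : IsOpen {t : ℝ | ∃ ε > (0 : ℝ), ∃ p q : ℝ,
      ∀ u : ℝ, |u - t| < ε → φ u = p * u + q} := by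
    rw [Metric.isOpen_iff]
    rintro t ⟨ε, hε, p, q, hpq⟩
    refine ⟨ε/2, by linarith, ?_⟩
    intro t' ht'
    rw [Metric.mem_ball, Real.dist_eq] at ht'
    refine ⟨ε/2, by linarith, p, q, ?_⟩
    intro u hu
    apply hpq u
    rw [abs_lt] at hu ht' ⊢
    constructor
    · linarith [hu.1, ht'.1]
    · linarith [hu.2, ht'.2]
  have hcl : IsClosed (NonlinSet φ) := by
    have h : NonlinSet φ = {t : ℝ | ∃ ε > (0 : ℝ), ∃ p q : ℝ,
        ∀ u : ℝ, |u - t| < ε → φ u = p * u + q}ᶜ := by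
      ext t; simp [NonlinSet]
    rw [h]
    exact hopen.isClosed_compl
  rw [IsNowhereDense, hcl.closure_eq, Set.eq_empty_iff_forall_notMem]
  intro t ht
  rw [mem_interior_iff_mem_nhds, Metric.mem_nhds_iff] at ht
  obtain ⟨δ, hδ, hball⟩ := ht
  obtain ⟨c, d, hcd, hsub, p, q, haff⟩ := main_sub (t - δ) (t + δ) (by linarith)
  have hmid : (c+d)/2 ∈ NonlinSet φ := by
    apply hball
    rw [Metric.mem_ball, Real.dist_eq]
    have h := hsub (show (c+d)/2 ∈ Set.Ioo c d from ⟨by linarith, by linarith⟩)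
    rw [abs_lt]
    constructor <;> [linarith [h.1]; linarith [h.2]]
  apply hmid
  refine ⟨(d - c)/2, by linarith, p, q, ?_⟩
  intro u hu
  rw [abs_lt] at hu
  exact haff u ⟨by linarith [hu.1], by linarith [hu.2]⟩
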